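/- Let 1 < p < ∞ and let 0 = n_0 < n_1 < n_2 < … be indices with n_k > 2n_{k−1} for every k ≥ 1, and set I_k := {n_{k−1}+1, …, n_k}. Let N ∈ ℕ, M > 0, and let z : ℕ → [0, ∞) be a sequence such that z(j) = 0 for j > n_N, such that Σ_{j ∈ I_k} z(j)^p ≤ M^p for each 1 ≤ k ≤ N, and such that z(j) ≤ z(i) whenever i ∈ I_k, j ∈ I_{k+1} and 1 ≤ k < N. Then ‖z‖_{p,∞} = sup_{j≥1} j^{1/p} z*(j) ≤ 4^{1/p} · M. -/

import Mathlib

open scoped ENNReal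

/-- The (0-indexed) non-increasing rearrangement of a sequence. -/
noncomputable def rearrangement (f : ℕ → ℝ) (k : ℕ) : ℝ :=
  sInf {lam : ℝ | 0 ≤ lam ∧ {i : ℕ | lam < |f i|}.Finite ∧ {i : ℕ | lam < |f i|}.ncard ≤ k}

/-- The weak Lebesgue (Marcinkiewicz) quasinorm
`‖f‖_{p,∞} = sup_{j ≥ 1} j^{1/p} f*(j)`. -/
noncomputable def weakNorm (p : ℝ) (f : ℕ → ℝ) : ℝ :=
  ⨆ k : ℕ, ((k : ℝ) + 1) ^ (1 / p) * rearrangement f k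

lemma exists_block_aux (nseq : ℕ → ℕ) (h0 : nseq 0 = 0)
    (N : ℕ) (j : ℕ) (hj : j < nseq N) :
    ∃ i < N, nseq i ≤ j ∧ j < nseq (i + 1) := by
  induction N with
  | zero => rw [h0] at hj; exact absurd hj (Nat.not_lt_zero j)
  | succ n ih =>
    by_cases h : j < nseq n
    · obtain ⟨i, hi, h1, h2⟩ := ih h
      exact ⟨i, Nat.lt_succ_of_lt hi, h1, h2⟩
    · exact ⟨n, Nat.lt_succ_self n, le_of_not_gt h, hj⟩

lemma count_bound (p : ℝ) (hp0 : 0 < p)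
    (nseq : ℕ → ℕ) (h0 : nseq 0 = 0)
    (hlac : ∀ i : ℕ, 2 * nseq i < nseq (i + 1))
    (N : ℕ) (M : ℝ) (hM : 0 < M)
    (z : ℕ → ℝ) (hznonneg : ∀ j, 0 ≤ z j)
    (hblock : ∀ i < N, ∑ j ∈ Finset.Ico (nseq i) (nseq (i + 1)), z j ^ p ≤ M ^ p)
    (hmono : ∀ i : ℕ, i + 2 ≤ N →
      ∀ a ∈ Finset.Ico (nseq i) (nseq (i + 1)),
        ∀ b ∈ Finset.Ico (nseq (i + 1)) (nseq (i + 2)), z b ≤ z a)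
    (lam : ℝ) (hlam : 0 < lam) :
    ((((Finset.range (nseq N)).filter (fun j => lam < z j)).card : ℝ)) * lam ^ p
      ≤ 3 * M ^ p := by
  have hMp : 0 < M ^ p := Real.rpow_pos_of_pos hM p
  have hlamp : 0 < lam ^ p := Real.rpow_pos_of_pos hlam p
  have hnmono : StrictMono nseq := strictMono_nat_of_lt_succ (fun n => by
    have := hlac n; omega)
  -- blockwise count bound
  have blockcnt : ∀ i < N,
      ((((Finset.Ico (nseq i) (nseq (i + 1))).filter (fun j => lam < z j)).card : ℝ))
        * lam ^ p ≤ M ^ p := by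
    intro i hi
    calc ((((Finset.Ico (nseq i) (nseq (i + 1))).filter (fun j => lam < z j)).card : ℝ))
          * lam ^ p
        = ∑ _j ∈ (Finset.Ico (nseq i) (nseq (i + 1))).filter (fun j => lam < z j),
            lam ^ p := by
          rw [Finset.sum_const, nsmul_eq_mul]
      _ ≤ ∑ j ∈ (Finset.Ico (nseq i) (nseq (i + 1))).filter (fun j => lam < z j),
            z j ^ p := by
          refine Finset.sum_le_sum fun j hj => ?_
          exact Real.rpow_le_rpow hlam.le (Finset.mem_filter.mp hj).2.le hp0.le
      _ ≤ ∑ j ∈ Finset.Ico (nseq i) (nseq (i + 1)), z j ^ p := by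
          refine Finset.sum_le_sum_of_subset_of_nonneg (Finset.filter_subset _ _)
            fun j _ _ => Real.rpow_nonneg (hznonneg j) p
      _ ≤ M ^ p := hblock i hi
  set S := (Finset.range (nseq N)).filter (fun j => lam < z j) with hSdef
  rcases S.eq_empty_or_nonempty with hSe | hSne
  · rw [hSe]
    simp only [Finset.card_empty, Nat.cast_zero, zero_mul]
    positivity
  -- the set of blocks meeting S
  set T := (Finset.range N).filter
      (fun i => ((Finset.Ico (nseq i) (nseq (i + 1))).filter (fun j => lam < z j)).Nonempty)
    with hTdef
  have hTne : T.Nonempty := by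
    obtain ⟨j, hj⟩ := hSne
    rw [hSdef, Finset.mem_filter, Finset.mem_range] at hj
    obtain ⟨i, hiN, h1, h2⟩ := exists_block_aux nseq h0 N j hj.1
    refine ⟨i, ?_⟩
    rw [hTdef, Finset.mem_filter, Finset.mem_range]
    exact ⟨hiN, ⟨j, Finset.mem_filter.mpr ⟨Finset.mem_Ico.mpr ⟨h1, h2⟩, hj.2⟩⟩⟩
  set m := T.max' hTne with hmdef
  have hmT : m ∈ T := T.max'_mem hTne
  have hmN : m < N := by
    have := (Finset.mem_filter.mp hmT).1
    exact Finset.mem_range.mp this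
  have hmne : ((Finset.Ico (nseq m) (nseq (m + 1))).filter (fun j => lam < z j)).Nonempty :=
    (Finset.mem_filter.mp hmT).2
  -- S is contained in range (nseq m) ∪ (block m ∩ S)
  have hSsub : S ⊆ Finset.range (nseq m) ∪
      (Finset.Ico (nseq m) (nseq (m + 1))).filter (fun j => lam < z j) := by
    intro j hj
    rw [hSdef, Finset.mem_filter, Finset.mem_range] at hj
    obtain ⟨i, hiN, h1, h2⟩ := exists_block_aux nseq h0 N j hj.1
    have hiT : i ∈ T := by
      rw [hTdef, Finset.mem_filter, Finset.mem_range]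
      exact ⟨hiN, ⟨j, Finset.mem_filter.mpr ⟨Finset.mem_Ico.mpr ⟨h1, h2⟩, hj.2⟩⟩⟩
    have him : i ≤ m := T.le_max' i hiT
    rw [Finset.mem_union, Finset.mem_range]
    by_cases hc : j < nseq m
    · exact Or.inl hc
    · right
      have hge : nseq m ≤ j := le_of_not_gt hc
      have : i = m := by
        rcases lt_or_eq_of_le him with h | h
        · exfalso
          have : nseq (i + 1) ≤ nseq m := hnmono.monotone h
          omega
        · exact h
      subst this
      exact Finset.mem_filter.mpr ⟨Finset.mem_Ico.mpr ⟨hge, h2⟩, hj.2⟩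
  have hcard : (S.card : ℝ) ≤ (nseq m : ℝ) +
      (((Finset.Ico (nseq m) (nseq (m + 1))).filter (fun j => lam < z j)).card : ℝ) := by
    have h1 := Finset.card_le_card hSsub
    have h2 := Finset.card_union_le (Finset.range (nseq m))
      ((Finset.Ico (nseq m) (nseq (m + 1))).filter (fun j => lam < z j))
    rw [Finset.card_range] at h2
    exact_mod_cast le_trans h1 h2
  -- bound nseq m * lam^p ≤ 2 M^p
  have hnm : (nseq m : ℝ) * lam ^ p ≤ 2 * M ^ p := by
    rcases Nat.eq_zero_or_pos m with hm0 | hmpos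
    · rw [hm0, h0]
      simp only [Nat.cast_zero, zero_mul]
      positivity
    · obtain ⟨i, hmi⟩ := Nat.exists_eq_succ_of_ne_zero (Nat.pos_iff_ne_zero.mp hmpos)
      rw [Nat.succ_eq_add_one] at hmi
      rw [hmi] at hmne hmN ⊢
      simp only [show i + 1 + 1 = i + 2 from rfl] at hmne
      obtain ⟨b, hb⟩ := hmne
      rw [Finset.mem_filter] at hb
      have hfull : Finset.Ico (nseq i) (nseq (i + 1)) ⊆
          (Finset.Ico (nseq i) (nseq (i + 1))).filter (fun j => lam < z j) := by
        intro a ha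
        refine Finset.mem_filter.mpr ⟨ha, lt_of_lt_of_le hb.2 ?_⟩
        exact hmono i (by omega) a ha b hb.1
      have hc1 : (nseq (i + 1) - nseq i : ℕ) ≤
          ((Finset.Ico (nseq i) (nseq (i + 1))).filter (fun j => lam < z j)).card := by
        have := Finset.card_le_card hfull
        rwa [Nat.card_Ico] at this
      have hc2 := blockcnt i (by omega)
      have hc3 : ((nseq (i + 1) - nseq i : ℕ) : ℝ) * lam ^ p ≤ M ^ p := by
        refine le_trans ?_ hc2
        have : ((nseq (i + 1) - nseq i : ℕ) : ℝ) ≤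
            (((Finset.Ico (nseq i) (nseq (i + 1))).filter (fun j => lam < z j)).card : ℝ) := by
          exact_mod_cast hc1
        exact mul_le_mul_of_nonneg_right this hlamp.le
      have hle : nseq i ≤ nseq (i + 1) := (hnmono (Nat.lt_succ_self i)).le
      have hcast : ((nseq (i + 1) - nseq i : ℕ) : ℝ) = (nseq (i + 1) : ℝ) - nseq i := by
        exact Nat.cast_sub hle
      have hl := hlac i
      have hl' : (nseq (i + 1) : ℝ) ≤ 2 * ((nseq (i + 1) : ℝ) - nseq i) := by
        have : (2 * nseq i : ℝ) < nseq (i + 1) := by exact_mod_cast hl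
        linarith
      calc (nseq (i + 1) : ℝ) * lam ^ p
          ≤ 2 * ((nseq (i + 1) : ℝ) - nseq i) * lam ^ p :=
            mul_le_mul_of_nonneg_right hl' hlamp.le
        _ = 2 * (((nseq (i + 1) - nseq i : ℕ) : ℝ) * lam ^ p) := by rw [hcast]; ring
        _ ≤ 2 * M ^ p := by linarith [hc3]
  have hcm := blockcnt m hmN
  calc (S.card : ℝ) * lam ^ p
      ≤ ((nseq m : ℝ) +
          (((Finset.Ico (nseq m) (nseq (m + 1))).filter (fun j => lam < z j)).card : ℝ))
          * lam ^ p := mul_le_mul_of_nonneg_right hcard hlamp.le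
    _ = (nseq m : ℝ) * lam ^ p +
          (((Finset.Ico (nseq m) (nseq (m + 1))).filter (fun j => lam < z j)).card : ℝ)
          * lam ^ p := by ring
    _ ≤ 2 * M ^ p + M ^ p := add_le_add hnm hcm
    _ = 3 * M ^ p := by ring

/-- A nonnegative sequence supported on the first `N` blocks
`I_k = {n_{k-1}+1, …, n_k}` (0-indexed: `[n_{k-1}, n_k)`) of a lacunary partition
(`n_k > 2 n_{k-1}`), with block-wise `ℓ_p`-sums at most `M^p` and non-increasing
from each block to the next, has weak `ℓ_{p,∞}` quasinorm at most `4^{1/p} M`. -/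
theorem weakNorm_blockwise_bound (p : ℝ) (hp : 1 < p)
    (nseq : ℕ → ℕ) (h0 : nseq 0 = 0)
    (hlac : ∀ i : ℕ, 2 * nseq i < nseq (i + 1))
    (N : ℕ) (M : ℝ) (hM : 0 < M)
    (z : ℕ → ℝ) (hznonneg : ∀ j, 0 ≤ z j)
    (hzsupp : ∀ j : ℕ, nseq N ≤ j → z j = 0)
    (hblock : ∀ i < N, ∑ j ∈ Finset.Ico (nseq i) (nseq (i + 1)), z j ^ p ≤ M ^ p)
    (hmono : ∀ i : ℕ, i + 2 ≤ N →
      ∀ a ∈ Finset.Ico (nseq i) (nseq (i + 1)),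
        ∀ b ∈ Finset.Ico (nseq (i + 1)) (nseq (i + 2)), z b ≤ z a) :
    weakNorm p z ≤ 4 ^ (1 / p) * M := by
  have hp0 : 0 < p := lt_trans one_pos hp
  have hMp : 0 < M ^ p := Real.rpow_pos_of_pos hM p
  refine Real.iSup_le (fun k => ?_) (by positivity)
  have hk1 : (0 : ℝ) < (k : ℝ) + 1 := by positivity
  set lam : ℝ := (4 / ((k : ℝ) + 1)) ^ (1 / p) * M with hlamdef
  have hlam : 0 < lam := by
    apply mul_pos _ hM
    apply Real.rpow_pos_of_pos
    positivity
  set S := (Finset.range (nseq N)).filter (fun j => lam < z j) with hSdef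
  have hSset : {i : ℕ | lam < |z i|} = ↑S := by
    ext i
    simp only [hSdef, Set.mem_setOf_eq, Finset.coe_filter, Finset.mem_range]
    rw [abs_of_nonneg (hznonneg i)]
    constructor
    · intro h
      refine ⟨?_, h⟩
      by_contra hi
      rw [hzsupp i (le_of_not_gt hi)] at h
      exact absurd h (not_lt.mpr hlam.le)
    · exact fun h => h.2
  -- the key cardinality bound
  have hlamp : lam ^ p = 4 / ((k : ℝ) + 1) * M ^ p := by
    rw [hlamdef, Real.mul_rpow (Real.rpow_nonneg (by positivity) _) hM.le,
      ← Real.rpow_mul (by positivity : (0:ℝ) ≤ 4 / ((k : ℝ) + 1)),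
      one_div_mul_cancel (ne_of_gt hp0), Real.rpow_one]
  have hcount := count_bound p hp0 nseq h0 hlac N M hM z hznonneg hblock hmono lam hlam
  rw [hlamp] at hcount
  have hScard : S.card ≤ k := by
    have h1 : (S.card : ℝ) * (4 / ((k : ℝ) + 1)) ≤ 3 := by
      rw [← mul_le_mul_iff_of_pos_right hMp]
      calc (S.card : ℝ) * (4 / ((k : ℝ) + 1)) * M ^ p
          = (S.card : ℝ) * (4 / ((k : ℝ) + 1) * M ^ p) := by ring
        _ ≤ 3 * M ^ p := hcount
    have h2 : (S.card : ℝ) < (k : ℝ) + 1 := by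
      by_contra hcon
      push_neg at hcon
      have h4 : (4 : ℝ) / ((k : ℝ) + 1) > 0 := by positivity
      have : ((k : ℝ) + 1) * (4 / ((k : ℝ) + 1)) ≤ 3 :=
        le_trans (mul_le_mul_of_nonneg_right hcon h4.le) h1
      rw [mul_div_cancel₀ _ (ne_of_gt hk1)] at this
      linarith
    have h3 : (S.card : ℝ) < ((k + 1 : ℕ) : ℝ) := by push_cast; linarith
    exact Nat.lt_succ_iff.mp (Nat.cast_lt.mp h3)
  have hre : rearrangement z k ≤ lam := by
    apply csInf_le
    · exact ⟨0, fun x hx => hx.1⟩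
    · refine ⟨hlam.le, ?_, ?_⟩
      · rw [hSset]; exact S.finite_toSet
      · rw [hSset, Set.ncard_coe_finset]; exact hScard
  calc ((k : ℝ) + 1) ^ (1 / p) * rearrangement z k
      ≤ ((k : ℝ) + 1) ^ (1 / p) * lam := by
        apply mul_le_mul_of_nonneg_left hre
        exact Real.rpow_nonneg hk1.le _
    _ = 4 ^ (1 / p) * M := by
        rw [hlamdef, ← mul_assoc, ← Real.mul_rpow hk1.le (by positivity : (0:ℝ) ≤ 4 / ((k : ℝ) + 1))]
        rw [mul_div_cancel₀ _ (ne_of_gt hk1)]
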